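/- One-dimensional global support bound (claim in the proof of Lemma 2.16). Let Ω ⊆ ℝ be an open interval, let v : Ω → ℝ be continuous, and let C ∈ ℝ. Assume that for every x ∈ Ω there is a C² lower support function for v at x whose second derivative is ≥ −C on a neighborhood of x. Fix x₀ ∈ Ω, let φ be a C² lower support function for v at x₀ with φ'' ≥ −C near x₀, and set a := φ'(x₀). Then for all x ∈ Ω, v(x) ≥ v(x₀) + a(x − x₀) − (C/2)(x − x₀)². -/

import Mathlib

lemma taylor_support (ψ : ℝ → ℝ) (N : Set ℝ) (hN : IsOpen N) {x : ℝ} (hx : x ∈ N)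
    (hψ : ContDiffOn ℝ 2 ψ N) (C : ℝ) (h'' : ∀ y ∈ N, -C ≤ deriv (deriv ψ) y) :
    ∃ δ > 0, ∀ y, |y - x| < δ →
      ψ x + deriv ψ x * (y - x) - C / 2 * (y - x) ^ 2 ≤ ψ y := by
  obtain ⟨δ, hδ0, hδ⟩ := Metric.isOpen_iff.1 hN x hx
  refine ⟨δ, hδ0, ?_⟩
  set B := Metric.ball x δ with hB
  have hBN : B ⊆ N := hδ
  have hdψ : DifferentiableOn ℝ ψ N := hψ.differentiableOn (by norm_num)
  have hψ1 : ContDiffOn ℝ 1 (deriv ψ) N := hψ.deriv_of_isOpen hN (by norm_num)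
  have hdψ' : DifferentiableOn ℝ (deriv ψ) N := hψ1.differentiableOn (by norm_num)
  set p : ℝ → ℝ := fun y => deriv ψ y + C * (y - x) with hp
  set q : ℝ → ℝ := fun y => ψ y - deriv ψ x * (y - x) + C / 2 * (y - x) ^ 2 with hq
  have hpd : ∀ y ∈ N, HasDerivAt p (deriv (deriv ψ) y + C) y := by
    intro y hy
    have h4 : HasDerivAt (deriv ψ) (deriv (deriv ψ) y) y :=
      (hdψ'.differentiableAt (hN.mem_nhds hy)).hasDerivAt
    have h5 : HasDerivAt (fun y => C * (y - x)) C y := by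
      simpa using ((hasDerivAt_id y).sub_const x).const_mul C
    exact h4.add h5
  have hqd : ∀ y ∈ N, HasDerivAt q (p y - p x) y := by
    intro y hy
    have h1 : HasDerivAt ψ (deriv ψ y) y := (hdψ.differentiableAt (hN.mem_nhds hy)).hasDerivAt
    have h2 : HasDerivAt (fun y => deriv ψ x * (y - x)) (deriv ψ x) y := by
      simpa using ((hasDerivAt_id y).sub_const x).const_mul (deriv ψ x)
    have h3 : HasDerivAt (fun y => C / 2 * (y - x) ^ 2) (C * (y - x)) y := by
      have := (((hasDerivAt_id y).sub_const x).pow 2).const_mul (C / 2)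
      refine this.congr_deriv ?_
      simp [hp]
      ring
    have := (h1.sub h2).add h3
    refine this.congr_deriv ?_
    simp [hp]
    ring
  have hpmono : MonotoneOn p B := by
    apply monotoneOn_of_hasDerivWithinAt_nonneg (convex_ball x δ)
      (f' := fun y => deriv (deriv ψ) y + C)
    · exact fun y hy => ((hpd y (hBN hy)).continuousAt).continuousWithinAt
    · intro y hy
      rw [Metric.isOpen_ball.interior_eq] at hy ⊢
      exact ((hpd y (hBN hy)).hasDerivWithinAt)
    · intro y hy
      rw [Metric.isOpen_ball.interior_eq] at hy
      have := h'' y (hBN hy)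
      linarith
  have hxB : x ∈ B := Metric.mem_ball_self hδ0
  intro y hxy
  have hyB : y ∈ B := by simpa [hB, Metric.mem_ball, Real.dist_eq] using hxy
  have hqx : q x = ψ x := by simp [hq]
  have hkey : q x ≤ q y := by
    rcases le_total x y with h | h
    · have hmono : MonotoneOn q (B ∩ Set.Ici x) := by
        apply monotoneOn_of_hasDerivWithinAt_nonneg ((convex_ball x δ).inter (convex_Ici x))
          (f' := fun y => p y - p x)
        · exact fun z hz => ((hqd z (hBN hz.1)).continuousAt).continuousWithinAt
        · intro z hz
          have hz' : z ∈ B ∩ Set.Ici x := interior_subset hz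
          exact (hqd z (hBN hz'.1)).hasDerivWithinAt
        · intro z hz
          rw [interior_inter, Metric.isOpen_ball.interior_eq, interior_Ici] at hz
          have := hpmono hxB hz.1 (le_of_lt hz.2)
          linarith
      exact hmono ⟨hxB, Set.self_mem_Ici⟩ ⟨hyB, h⟩ h
    · have hmono : AntitoneOn q (B ∩ Set.Iic x) := by
        apply antitoneOn_of_hasDerivWithinAt_nonpos ((convex_ball x δ).inter (convex_Iic x))
          (f' := fun y => p y - p x)
        · exact fun z hz => ((hqd z (hBN hz.1)).continuousAt).continuousWithinAt
        · intro z hz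
          have hz' : z ∈ B ∩ Set.Iic x := interior_subset hz
          exact (hqd z (hBN hz'.1)).hasDerivWithinAt
        · intro z hz
          rw [interior_inter, Metric.isOpen_ball.interior_eq, interior_Iic] at hz
          have := hpmono hz.1 hxB (le_of_lt hz.2)
          linarith
      exact hmono ⟨hyB, h⟩ ⟨hxB, Set.self_mem_Ici⟩ h
  rw [hqx] at hkey
  simp only [hq] at hkey
  linarith

set_option maxHeartbeats 1000000 in
/-- One-dimensional global support bound (claim in the proof of Lemma 2.16). -/
theorem one_dimensional_global_support_bound
    (Ω : Set ℝ) (hΩopen : IsOpen Ω) (hΩinterval : Convex ℝ Ω)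
    (v : ℝ → ℝ) (hv : ContinuousOn v Ω) (C : ℝ)
    (hsupp : ∀ x ∈ Ω, ∃ (ψ : ℝ → ℝ) (N : Set ℝ),
      IsOpen N ∧ x ∈ N ∧ ContDiffOn ℝ 2 ψ N ∧ ψ x = v x ∧
      (∀ y ∈ N ∩ Ω, ψ y ≤ v y) ∧ (∀ y ∈ N, -C ≤ deriv (deriv ψ) y))
    (x₀ : ℝ) (hx₀ : x₀ ∈ Ω)
    (φ : ℝ → ℝ) (N : Set ℝ) (hNopen : IsOpen N) (hx₀N : x₀ ∈ N)
    (hφC2 : ContDiffOn ℝ 2 φ N) (hφx₀ : φ x₀ = v x₀)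
    (hφle : ∀ y ∈ N ∩ Ω, φ y ≤ v y)
    (hφ'' : ∀ y ∈ N, -C ≤ deriv (deriv φ) y) :
    ∀ x ∈ Ω, v x₀ + deriv φ x₀ * (x - x₀) - C / 2 * (x - x₀) ^ 2 ≤ v x := by
  intro x₁ hx₁
  set a := deriv φ x₀ with ha
  by_cases hne : x₁ = x₀
  · subst hne; simp
  have main : ∀ ε : ℝ, 0 < ε →
      v x₀ + a * (x₁ - x₀) - C / 2 * (x₁ - x₀) ^ 2 ≤ v x₁ + ε * (x₁ - x₀) ^ 2 := by
    intro ε hε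
    set u : ℝ → ℝ := fun y => v y - v x₀ - a * (y - x₀) + (C / 2 + ε) * (y - x₀) ^ 2 with hu
    suffices h : 0 ≤ u x₁ by simp only [hu] at h; nlinarith
    -- strict parabolic lower support at every point of Ω
    have key : ∀ x ∈ Ω, ∃ δ > 0, ∃ M : ℝ, ∀ y ∈ Ω, |y - x| < δ →
        u x + M * (y - x) + ε * (y - x) ^ 2 ≤ u y := by
      intro x hxΩ
      obtain ⟨ψ, N', hN'open, hxN', hψC2, hψx, hψle, hψ''⟩ := hsupp x hxΩ
      obtain ⟨δ₁, hδ₁0, hδ₁⟩ := taylor_support ψ N' hN'open hxN' hψC2 C hψ''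
      obtain ⟨δ₂, hδ₂0, hδ₂⟩ := Metric.isOpen_iff.1 hN'open x hxN'
      refine ⟨min δ₁ δ₂, lt_min hδ₁0 hδ₂0,
        deriv ψ x - a + (C + 2 * ε) * (x - x₀), ?_⟩
      intro y hyΩ hy
      have h1 : ψ x + deriv ψ x * (y - x) - C / 2 * (y - x) ^ 2 ≤ ψ y :=
        hδ₁ y (lt_of_lt_of_le hy (min_le_left _ _))
      have h2 : ψ y ≤ v y := hψle y
        ⟨hδ₂ (by simpa [Metric.mem_ball, Real.dist_eq] using lt_of_lt_of_le hy (min_le_right _ _)),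
          hyΩ⟩
      simp only [hu]
      nlinarith [h1, h2, hψx]
    -- slope-zero support at x₀
    obtain ⟨δ₀, hδ₀0, hδ₀⟩ : ∃ δ₀ > 0, ∀ y ∈ Ω, |y - x₀| < δ₀ → ε * (y - x₀) ^ 2 ≤ u y := by
      obtain ⟨δ₁, hδ₁0, hδ₁⟩ := taylor_support φ N hNopen hx₀N hφC2 C hφ''
      obtain ⟨δ₂, hδ₂0, hδ₂⟩ := Metric.isOpen_iff.1 hNopen x₀ hx₀N
      refine ⟨min δ₁ δ₂, lt_min hδ₁0 hδ₂0, ?_⟩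
      intro y hyΩ hy
      have h1 := hδ₁ y (lt_of_lt_of_le hy (min_le_left _ _))
      have h2 : φ y ≤ v y := hφle y
        ⟨hδ₂ (by simpa [Metric.mem_ball, Real.dist_eq] using lt_of_lt_of_le hy (min_le_right _ _)),
          hyΩ⟩
      simp only [hu]
      nlinarith [h1, h2, hφx₀]
    set I := Set.Icc (x₀ ⊓ x₁) (x₀ ⊔ x₁) with hI
    have hIu : I = Set.uIcc x₀ x₁ := rfl
    have hIΩ : I ⊆ Ω := by rw [hIu]; exact hΩinterval.ordConnected.uIcc_subset hx₀ hx₁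
    have huc : ContinuousOn u Ω := by
      apply ContinuousOn.add
      · apply ContinuousOn.sub
        · exact hv.sub continuousOn_const
        · exact (continuous_const.mul (continuous_id.sub continuous_const)).continuousOn
      · exact Continuous.continuousOn (by continuity)
    set s := u x₁ / (x₁ - x₀) with hs
    set w : ℝ → ℝ := fun y => u y - s * (y - x₀) with hw
    have hwc : ContinuousOn w I :=
      (huc.mono hIΩ).sub (Continuous.continuousOn (by continuity))
    have hIcompact : IsCompact I := isCompact_Icc
    obtain ⟨z, hzI, hzmax⟩ := hIcompact.exists_isMaxOn
      ⟨x₀, Set.left_mem_uIcc⟩ hwc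
    have hzΩ : z ∈ Ω := hIΩ hzI
    have hx10 : x₁ - x₀ ≠ 0 := sub_ne_zero.2 hne
    have hux₀ : u x₀ = 0 := by simp [hu]
    have hend : z = x₀ ∨ z = x₁ := by
      by_contra hcon
      push_neg at hcon
      obtain ⟨hz0, hz1⟩ := hcon
      obtain ⟨δ, hδ0, M, hM⟩ := key z hzΩ
      have hzlo : x₀ ⊓ x₁ < z := by
        refine lt_of_le_of_ne hzI.1 ?_
        rcases min_choice x₀ x₁ with h | h <;> rw [h] <;>
          [exact fun he => hz0 he.symm; exact fun he => hz1 he.symm]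
      have hzhi : z < x₀ ⊔ x₁ := by
        refine lt_of_le_of_ne hzI.2 ?_
        rcases max_choice x₀ x₁ with h | h <;> rw [h] <;>
          [exact fun he => hz0 he; exact fun he => hz1 he]
      set t := min (min (x₀ ⊔ x₁ - z) (z - x₀ ⊓ x₁)) (δ / 2) with htdef
      have ht0 : 0 < t := by
        apply lt_min (lt_min (by linarith) (by linarith)) (by linarith)
      have htδ : t < δ := lt_of_le_of_lt (min_le_right _ _) (by linarith)
      have ht1 : t ≤ x₀ ⊔ x₁ - z := le_trans (min_le_left _ _) (min_le_left _ _)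
      have ht2 : t ≤ z - x₀ ⊓ x₁ := le_trans (min_le_left _ _) (min_le_right _ _)
      have hyp : z + t ∈ I := ⟨by linarith, by linarith⟩
      have hym : z - t ∈ I := ⟨by linarith, by linarith⟩
      have hp := hM (z + t) (hIΩ hyp) (by rw [add_sub_cancel_left, abs_of_pos ht0]; exact htδ)
      have hm := hM (z - t) (hIΩ hym)
        (by rw [sub_sub_cancel_left, abs_neg, abs_of_pos ht0]; exact htδ)
      have hwp : w (z + t) ≤ w z := hzmax hyp
      have hwm : w (z - t) ≤ w z := hzmax hym
      simp only [hw] at hwp hwm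
      nlinarith [hp, hm, hwp, hwm, mul_pos hε (mul_pos ht0 ht0)]
    have hwz : w z = 0 := by
      rcases hend with h | h
      · rw [h]; simp [hw, hux₀]
      · rw [h]; simp only [hw, hs]
        field_simp
        ring
    have hwle : ∀ y ∈ I, w y ≤ 0 := fun y hy => (hzmax hy).trans_eq hwz
    -- pick a point slightly towards x₁ from x₀
    set A := |x₁ - x₀| with hA
    have hA0 : 0 ≤ A := abs_nonneg _
    set t := min (δ₀ / (2 * (A + 1))) (1 / 2) with htdef
    have ht0 : 0 < t := lt_min (by positivity) (by norm_num)
    have ht1 : t ≤ 1 := le_trans (min_le_right _ _) (by norm_num)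
    have htA : t * A < δ₀ := by
      have h1 : t ≤ δ₀ / (2 * (A + 1)) := min_le_left _ _
      have h2 : t * (2 * (A + 1)) ≤ δ₀ := by
        rw [← le_div_iff₀ (by positivity)]; exact h1
      nlinarith
    set y := x₀ + t * (x₁ - x₀) with hy
    have hyI : y ∈ I := by
      rcases le_total x₀ x₁ with h | h
      · constructor
        · rw [min_eq_left h]; nlinarith
        · rw [max_eq_right h]; nlinarith
      · constructor
        · rw [min_eq_right h]; nlinarith
        · rw [max_eq_left h]; nlinarith
    have hyd : |y - x₀| < δ₀ := by
      rw [hy, add_sub_cancel_left, abs_mul, abs_of_pos ht0]; exact htA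
    have h1 : ε * (y - x₀) ^ 2 ≤ u y := hδ₀ y (hIΩ hyI) hyd
    have h2 : u y - s * (y - x₀) ≤ 0 := hwle y hyI
    have h3 : s * (y - x₀) = t * u x₁ := by
      rw [hy, add_sub_cancel_left, hs]; field_simp
    have hx10sq : 0 < (x₁ - x₀) ^ 2 := by positivity
    nlinarith [h1, h2, h3, mul_pos ht0 hx10sq, sq_nonneg (y - x₀)]
  apply le_of_forall_sub_le
  intro c hc
  have hx10 : x₁ - x₀ ≠ 0 := sub_ne_zero.2 hne
  have hK0 : (0:ℝ) < (x₁ - x₀) ^ 2 := by positivity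
  have h := main (c / (2 * (x₁ - x₀) ^ 2)) (div_pos hc (by linarith))
  have heq : c / (2 * (x₁ - x₀) ^ 2) * (x₁ - x₀) ^ 2 = c / 2 := by
    field_simp
  linarith
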